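/- Suppose there exist real constants C₁, C₂ > 0, positive integers j and d, and a function m ↦ n(m) from positive integers to positive integers with n(m) → ∞ as m → ∞, such that for every positive integer m with m ≡ j (mod d) and every primitive m-th root of unity x_m, one has |χ_{n(m)}(x_m)| ≥ C₁ and max(|Q_{n(m)}(x_m)|, |Q_{n(m)-1}(x_m)|) ≤ C₂. Then there exists an uncountable set Y of points on the unit circle {z ∈ ℂ : |z| = 1} such that for every y ∈ Y there are infinitely many positive integers n with |P_n(y)Q_{n-1}(y) − P_{n-1}(y)Q_n(y)| > C₁/2 and |Q_n(y)| < 1 + C₂ and |Q_{n-1}(y)| < 1 + C₂. -/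

import Mathlib

open Filter Topology Polynomial

/-- Numerators `P_n` of the continued fraction `b₀ + K_{n=1}^∞ aₙ/bₙ` with integer
polynomial partial numerators `a n` (`n ≥ 1`; `a 0` is unused) and partial denominators
`b n`, evaluated at `q : ℂ`:  `P_{-1} = 1`, `P_0 = b₀`, `P_n = bₙ P_{n-1} + aₙ P_{n-2}`. -/
noncomputable def gP (a b : ℕ → Polynomial ℤ) (q : ℂ) : ℕ → ℂ
  | 0 => aeval q (b 0)
  | 1 => aeval q (b 1) * aeval q (b 0) + aeval q (a 1)
  | n + 2 => aeval q (b (n + 2)) * gP a b q (n + 1) + aeval q (a (n + 2)) * gP a b q n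

/-- Denominators `Q_n` of the continued fraction `b₀ + K_{n=1}^∞ aₙ/bₙ`:
`Q_{-1} = 0`, `Q_0 = 1`, `Q_n = bₙ Q_{n-1} + aₙ Q_{n-2}`. -/
noncomputable def gQ (a b : ℕ → Polynomial ℤ) (q : ℂ) : ℕ → ℂ
  | 0 => 1
  | 1 => aeval q (b 1)
  | n + 2 => aeval q (b (n + 2)) * gQ a b q (n + 1) + aeval q (a (n + 2)) * gQ a b q n

/-- `χ_n(q) = ∏_{i=1}^n a_i(q)`. -/
noncomputable def gChi (a : ℕ → Polynomial ℤ) (q : ℂ) (n : ℕ) : ℂ :=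
  ∏ i ∈ Finset.Icc 1 n, aeval q (a i)

set_option maxHeartbeats 2000000

lemma continuous_gP (a b : ℕ → Polynomial ℤ) (n : ℕ) : Continuous fun y : ℂ => gP a b y n := by
  induction n using Nat.strong_induction_on with
  | _ n ih =>
    match n with
    | 0 => simpa [gP] using Polynomial.continuous_aeval (b 0)
    | 1 =>
      simp only [gP]
      exact ((Polynomial.continuous_aeval (b 1)).mul (Polynomial.continuous_aeval (b 0))).add
        (Polynomial.continuous_aeval (a 1))
    | (n+2) =>
      simp only [gP]
      exact ((Polynomial.continuous_aeval (b (n+2))).mul (ih (n+1) (by omega))).add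
        ((Polynomial.continuous_aeval (a (n+2))).mul (ih n (by omega)))

lemma continuous_gQ (a b : ℕ → Polynomial ℤ) (n : ℕ) : Continuous fun y : ℂ => gQ a b y n := by
  induction n using Nat.strong_induction_on with
  | _ n ih =>
    match n with
    | 0 => simpa [gQ] using continuous_const
    | 1 => simpa [gQ] using Polynomial.continuous_aeval (b 1)
    | (n+2) =>
      simp only [gQ]
      exact ((Polynomial.continuous_aeval (b (n+2))).mul (ih (n+1) (by omega))).add
        ((Polynomial.continuous_aeval (a (n+2))).mul (ih n (by omega)))

lemma det_eq (a b : ℕ → Polynomial ℤ) (y : ℂ) (n : ℕ) :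
    gP a b y (n+1) * gQ a b y n - gP a b y n * gQ a b y (n+1)
      = (-1:ℂ)^n * gChi a y (n+1) := by
  induction n with
  | zero => simp [gP, gQ, gChi]; ring
  | succ n ih =>
    have hchi : gChi a y (n+2) = gChi a y (n+1) * aeval y (a (n+2)) :=
      Finset.prod_Icc_succ_top (by omega) _
    have hP : gP a b y (n+2)
        = aeval y (b (n+2)) * gP a b y (n+1) + aeval y (a (n+2)) * gP a b y n := rfl
    have hQ : gQ a b y (n+2)
        = aeval y (b (n+2)) * gQ a b y (n+1) + aeval y (a (n+2)) * gQ a b y n := rfl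
    rw [hP, hQ, hchi, pow_succ]
    linear_combination (- aeval y (a (n+2))) * ih

open Complex

lemma exp_dist_le (θ δ : ℝ) (h : |δ| ≤ 1) :
    dist (Complex.exp ((↑(θ+δ) : ℂ) * I)) (Complex.exp ((θ : ℂ) * I)) ≤ 2 * |δ| := by
  have habs : ‖(δ:ℂ) * I‖ = |δ| := by
    simp
  have hsplit : Complex.exp ((↑(θ+δ) : ℂ) * I) - Complex.exp ((θ:ℂ)*I)
      = Complex.exp ((θ:ℂ)*I) * (Complex.exp ((δ:ℂ)*I) - 1) := by
    rw [show ((↑(θ+δ):ℂ) * I) = (θ:ℂ)*I + (δ:ℂ)*I by push_cast; ring, Complex.exp_add]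
    ring
  rw [Complex.dist_eq, hsplit, norm_mul, Complex.norm_exp_ofReal_mul_I, one_mul]
  calc ‖Complex.exp ((δ:ℂ)*I) - 1‖ ≤ 2 * ‖(δ:ℂ)*I‖ :=
        Complex.norm_exp_sub_one_le (by rw [habs]; exact h)
    _ = 2 * |δ| := by rw [habs]

lemma exp_ne_of (θ δ : ℝ) (h0 : 0 < δ) (h2 : δ < 2 * Real.pi) :
    Complex.exp ((↑(θ+δ) : ℂ) * I) ≠ Complex.exp ((θ:ℂ) * I) := by
  intro h
  have h1 : Complex.exp ((θ:ℂ)*I) * Complex.exp ((δ:ℂ)*I) = Complex.exp ((θ:ℂ)*I) * 1 := by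
    rw [mul_one, ← Complex.exp_add, ← h]
    congr 1
    push_cast; ring
  have h3 : Complex.exp ((δ:ℂ)*I) = 1 := mul_left_cancel₀ (Complex.exp_ne_zero _) h1
  rw [Complex.exp_eq_one_iff] at h3
  obtain ⟨n, hn⟩ := h3
  have hn' : (δ:ℂ) * I = ((n:ℂ) * (2*Real.pi)) * I := by rw [hn]; ring
  have hδc : (δ:ℂ) = (n:ℂ) * (2*Real.pi) := mul_right_cancel₀ Complex.I_ne_zero hn'
  have hδ : δ = (n:ℝ) * (2*Real.pi) := by exact_mod_cast hδc
  rcases le_or_gt 1 n with hn1 | hn1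
  · have : (1:ℝ) ≤ (n:ℝ) := by exact_mod_cast hn1
    nlinarith [Real.pi_pos]
  · have : (n:ℝ) ≤ 0 := by exact_mod_cast Int.lt_add_one_iff.mp hn1
    nlinarith [Real.pi_pos]

lemma sphere_mem_iff (x : ℂ) : x ∈ Metric.sphere (0:ℂ) 1 ↔ ‖x‖ = 1 := by
  simp [Complex.dist_eq]

lemma sphere_nebot (z : Metric.sphere (0:ℂ) 1) : (𝓝[≠] z).NeBot := by
  rw [← mem_closure_iff_nhdsWithin_neBot]
  obtain ⟨θ, hz⟩ : ∃ θ : ℝ, (z:ℂ) = Complex.exp ((θ:ℂ) * I) := by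
    refine ⟨Complex.arg (z:ℂ), ?_⟩
    conv_lhs => rw [← Complex.norm_mul_exp_arg_mul_I (z:ℂ)]
    rw [(sphere_mem_iff (z:ℂ)).mp z.2]
    simp
  have hd0 : ∀ k : ℕ, 0 < 1/((k:ℝ)+1) := fun k => by positivity
  have hd1 : ∀ k : ℕ, 1/((k:ℝ)+1) ≤ 1 := fun k => by
    rw [div_le_one (by positivity)]
    linarith [Nat.cast_nonneg (α := ℝ) k]
  have hmem : ∀ k : ℕ, Complex.exp ((↑(θ + 1/(k+1)) : ℂ) * I) ∈ Metric.sphere (0:ℂ) 1 := by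
    intro k
    rw [sphere_mem_iff]
    exact Complex.norm_exp_ofReal_mul_I _
  set u : ℕ → Metric.sphere (0:ℂ) 1 := fun k => ⟨_, hmem k⟩ with hu
  have hne : ∀ k, u k ≠ z := by
    intro k hk
    have h2pi : 1/((k:ℝ)+1) < 2 * Real.pi := by
      have := hd1 k
      nlinarith [Real.pi_gt_three]
    have heq : Complex.exp ((↑(θ + 1/(k+1)) : ℂ) * I) = Complex.exp ((θ:ℂ) * I) := by
      rw [← hz]
      exact congrArg Subtype.val hk
    exact exp_ne_of θ (1/(k+1)) (hd0 k) h2pi heq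
  have htend : Filter.Tendsto u atTop (𝓝 z) := by
    rw [Metric.tendsto_atTop]
    intro ε hε
    obtain ⟨K, hK⟩ := exists_nat_gt (2/ε)
    refine ⟨K, fun k hk => ?_⟩
    have hdist : dist (u k) z ≤ 2 * |1/((k:ℝ)+1)| := by
      rw [Subtype.dist_eq, hz]
      exact exp_dist_le θ (1/(k+1)) (by rw [abs_of_pos (hd0 k)]; exact hd1 k)
    have h1 : |1/((k:ℝ)+1)| = 1/((k:ℝ)+1) := abs_of_pos (hd0 k)
    have hkK : (K:ℝ) ≤ k := by exact_mod_cast hk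
    have hKpos : (0:ℝ) < (k:ℝ)+1 := by positivity
    calc dist (u k) z ≤ 2 * |1/((k:ℝ)+1)| := hdist
      _ = 2/((k:ℝ)+1) := by rw [h1]; ring
      _ < ε := by
          have h3 : 2/ε < (k:ℝ)+1 := by linarith
          have h4 : 2 < ((k:ℝ)+1) * ε := (div_lt_iff₀ hε).mp h3
          rw [div_lt_iff₀ hKpos]
          linarith
  exact mem_closure_of_tendsto htend (Filter.Eventually.of_forall fun k => hne k)

lemma exists_prim_root_near (j d : ℕ) (hj : 0 < j) (hd : 0 < d) (M : ℕ) (θ ε : ℝ)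
    (hθ : 0 < θ) (hε : 0 < ε) :
    ∃ m : ℕ, M ≤ m ∧ 0 < m ∧ m ≡ j [MOD d] ∧ ∃ x : ℂ, IsPrimitiveRoot x m ∧
      x ∈ Metric.sphere (0:ℂ) 1 ∧ dist x (Complex.exp ((θ:ℂ) * I)) < ε := by
  set g := j.gcd d with hgdef
  have hg : 0 < g := Nat.gcd_pos_of_pos_left d hj
  set u := j / g with hudef
  set v := d / g with hvdef
  have hv : 0 < v := Nat.div_pos (Nat.le_of_dvd hd (Nat.gcd_dvd_right j d)) hg
  haveI : NeZero v := ⟨hv.ne'⟩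
  have hcop : u.Coprime v := Nat.coprime_div_gcd_div_gcd hg
  have hunit : IsUnit (u : ZMod v) := (ZMod.isUnit_iff_coprime u v).mpr hcop
  obtain ⟨K, hK⟩ := exists_nat_gt (12 * Real.pi / ε)
  set P := max (max M g) (1000 + K) with hP
  obtain ⟨p, hpP, hp, hpv⟩ := Nat.forall_exists_prime_gt_and_eq_mod hunit P
  have hpM : M < p := lt_of_le_of_lt (le_trans (le_max_left M g) (le_max_left _ _)) hpP
  have hpg : g < p := lt_of_le_of_lt (le_trans (le_max_right M g) (le_max_left _ _)) hpP
  have hp1000 : 1000 < p := lt_of_le_of_lt (le_trans (Nat.le_add_right 1000 K) (le_max_right _ _)) hpP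
  have hpK : (12 * Real.pi / ε : ℝ) < p := by
    have : (K:ℝ) ≤ p := by
      have : K ≤ p := le_of_lt (lt_of_le_of_lt (le_trans (Nat.le_add_left K 1000) (le_max_right _ _)) hpP)
      exact_mod_cast this
    linarith
  set m := g * p with hm
  have hm0 : 0 < m := Nat.mul_pos hg hp.pos
  have hmM : M ≤ m := by
    calc M ≤ p := hpM.le
      _ = 1 * p := (one_mul p).symm
      _ ≤ g * p := Nat.mul_le_mul_right p hg
  have hmod : m ≡ j [MOD d] := by
    have hpu : p ≡ u [MOD v] := (ZMod.natCast_eq_natCast_iff p u v).mp hpv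
    have h1 : g * p ≡ g * u [MOD g * v] := hpu.mul_left' g
    have h2 : g * u = j := Nat.mul_div_cancel' (Nat.gcd_dvd_left j d)
    have h3 : g * v = d := Nat.mul_div_cancel' (Nat.gcd_dvd_right j d)
    rwa [h2, h3] at h1
  -- choose k coprime to m near θ m / 2π
  set t : ℝ := θ * m / (2 * Real.pi) with ht
  have ht0 : 0 < t := by positivity
  set k₀ := ⌊t⌋₊ with hk₀
  set k₁ := g * (k₀ / g + 1) + 1 with hk₁def
  set k₂ := k₁ + g with hk₂def
  have hdm := Nat.div_add_mod k₀ g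
  have hmlt := Nat.mod_lt k₀ hg
  have hk1A : k₁ = g * (k₀ / g) + g + 1 := by rw [hk₁def, Nat.mul_add, Nat.mul_one]
  have hk1lb : k₀ + 2 ≤ k₁ := by omega
  have hk2ub : k₂ ≤ k₀ + 2 * g + 1 := by omega
  have hcg : ∀ s : ℕ, (g * s + 1).Coprime g := by
    intro s
    simpa [Nat.coprime_comm] using (Nat.coprime_mul_right_add_right g 1 s).mpr (Nat.coprime_one_right g)
  have hk₁g : k₁.Coprime g := hcg _
  have hk₂g : k₂.Coprime g := by
    rw [hk₂def, hk1A]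
    have : g * (k₀ / g) + g + 1 + g = g * (k₀ / g + 2) + 1 := by ring
    rw [this]; exact hcg _
  have hnotboth : ¬ (p ∣ k₁ ∧ p ∣ k₂) := by
    rintro ⟨h1, h2⟩
    have hsub : k₂ - k₁ = g := by omega
    have hpg' : p ∣ g := hsub ▸ Nat.dvd_sub h2 h1
    have hpd : p ∣ g * (k₀ / g + 1) := hpg'.mul_right _
    have hone : k₁ - g * (k₀ / g + 1) = 1 := by
      omega
    have : p ∣ 1 := hone ▸ Nat.dvd_sub h1 hpd
    exact hp.one_lt.ne' (Nat.dvd_one.mp this)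
  -- pick k ∈ {k₁, k₂} not divisible by p
  obtain ⟨k, hkg, hkp, hklb, hkub⟩ :
      ∃ k : ℕ, k.Coprime g ∧ ¬ p ∣ k ∧ k₀ + 2 ≤ k ∧ k ≤ k₀ + 2 * g + 1 := by
    by_cases h1 : p ∣ k₁
    · exact ⟨k₂, hk₂g, fun h2 => hnotboth ⟨h1, h2⟩, by omega, hk2ub⟩
    · exact ⟨k₁, hk₁g, h1, hk1lb, by omega⟩
  have hkm : k.Coprime m := by
    rw [hm]
    exact Nat.Coprime.mul_right hkg (Nat.coprime_comm.mp ((hp.coprime_iff_not_dvd).mpr hkp))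
  -- the primitive root
  have hmne : (m:ℂ) ≠ 0 := by exact_mod_cast hm0.ne'
  set ζ : ℂ := Complex.exp (2 * Real.pi * I / m) with hζ
  have hζprim : IsPrimitiveRoot ζ m := Complex.isPrimitiveRoot_exp m hm0.ne'
  set x : ℂ := ζ ^ k with hx
  have hxprim : IsPrimitiveRoot x m := hζprim.pow_of_coprime k hkm
  set δ : ℝ := 2 * Real.pi * k / m - θ with hδ
  have hθδ : θ + δ = 2 * Real.pi * k / m := by rw [hδ]; ring
  have hxe : x = Complex.exp ((↑(θ + δ) : ℂ) * I) := by
    rw [hx, hζ, ← Complex.exp_nat_mul]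
    congr 1
    rw [hθδ]
    push_cast
    field_simp
  -- bounds on δ
  have hk₀le : (k₀ : ℝ) ≤ t := Nat.floor_le ht0.le
  have htlt : t < k₀ + 1 := Nat.lt_floor_add_one t
  have hklbR : t + 1 ≤ (k : ℝ) := by
    have : (k₀ : ℝ) + 2 ≤ (k : ℝ) := by exact_mod_cast hklb
    linarith
  have hkubR : (k : ℝ) ≤ t + 2 * g + 1 := by
    have : (k : ℝ) ≤ (k₀ : ℝ) + 2 * g + 1 := by exact_mod_cast hkub
    linarith
  have hmR : (0:ℝ) < m := by exact_mod_cast hm0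
  have hgR : (1:ℝ) ≤ g := by exact_mod_cast hg
  have hθt : θ = 2 * Real.pi * t / m := by
    rw [ht]
    field_simp
  have hδeq : δ = 2 * Real.pi / m * ((k:ℝ) - t) := by
    rw [hδ, hθt]; field_simp
  have hpR : (0:ℝ) < p := by exact_mod_cast hp.pos
  have hmgp : (m:ℝ) = g * p := by exact_mod_cast congrArg (Nat.cast : ℕ → ℝ) hm
  have hδpos : 0 < δ := by
    rw [hδeq]
    have : (0:ℝ) < (k:ℝ) - t := by linarith
    positivity
  have hδub : δ ≤ 6 * Real.pi / p := by
    rw [hδeq]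
    have h1 : (k:ℝ) - t ≤ 3 * g := by linarith
    have h2 : 2 * Real.pi / m * ((k:ℝ) - t) ≤ 2 * Real.pi / m * (3 * g) := by
      apply mul_le_mul_of_nonneg_left h1
      positivity
    have h3 : 2 * Real.pi / m * (3 * g) = 6 * Real.pi / p := by
      rw [hmgp]
      field_simp
      ring
    linarith
  have hp19 : (19:ℝ) ≤ p := by
    have : (1000:ℝ) < p := by exact_mod_cast hp1000
    linarith
  have hδ1 : |δ| ≤ 1 := by
    rw [abs_of_pos hδpos]
    have h6 : 6 * Real.pi / p ≤ 1 := by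
      rw [div_le_one hpR]
      nlinarith [Real.pi_lt_d2]
    exact le_trans hδub h6
  have hdist : dist x (Complex.exp ((θ:ℂ) * I)) < ε := by
    rw [hxe]
    have h1 := exp_dist_le θ δ hδ1
    have h2 : 2 * |δ| < ε := by
      rw [abs_of_pos hδpos]
      have h3 : 12 * Real.pi < ε * p := by
        rw [div_lt_iff₀ hε] at hpK
        linarith
      have h4 : 2 * δ ≤ 2 * (6 * Real.pi / p) := by
        have h20 : (0:ℝ) ≤ 2 := by norm_num
        exact mul_le_mul_of_nonneg_left hδub h20
      have h5 : 2 * (6 * Real.pi / p) < ε := by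
        rw [show (2:ℝ) * (6 * Real.pi / p) = 12 * Real.pi / p by ring, div_lt_iff₀ hpR]
        linarith
      exact lt_of_le_of_lt h4 h5
    linarith
  have hxsph : x ∈ Metric.sphere (0:ℂ) 1 := by
    rw [sphere_mem_iff, hxe]
    exact Complex.norm_exp_ofReal_mul_I _
  exact ⟨m, hmM, hm0, hmod, x, hxprim, hxsph, hdist⟩


def goodSetCond (a b : ℕ → Polynomial ℤ) (C₁ C₂ : ℝ) (n : ℕ) (y : ℂ) : Prop :=
  C₁ / 2 < ‖gP a b y n * gQ a b y (n - 1) - gP a b y (n - 1) * gQ a b y n‖ ∧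
    ‖gQ a b y n‖ < 1 + C₂ ∧ ‖gQ a b y (n - 1)‖ < 1 + C₂

def bigS (a b : ℕ → Polynomial ℤ) (C₁ C₂ : ℝ) (N : ℕ) : Set ℂ :=
  ⋃ n ∈ {n : ℕ | N ≤ n ∧ 0 < n}, {y : ℂ | goodSetCond a b C₁ C₂ n y}

lemma mem_bigS {a b : ℕ → Polynomial ℤ} {C₁ C₂ : ℝ} {N : ℕ} {y : ℂ} :
    y ∈ bigS a b C₁ C₂ N ↔ ∃ n, (N ≤ n ∧ 0 < n) ∧
      (C₁ / 2 < ‖gP a b y n * gQ a b y (n - 1) - gP a b y (n - 1) * gQ a b y n‖ ∧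
        ‖gQ a b y n‖ < 1 + C₂ ∧ ‖gQ a b y (n - 1)‖ < 1 + C₂) := by
  simp [bigS, goodSetCond]
  tauto

lemma isOpen_goodSet (a b : ℕ → Polynomial ℤ) (C₁ C₂ : ℝ) (n : ℕ) :
    IsOpen {y : ℂ | goodSetCond a b C₁ C₂ n y} := by
  have h1 : IsOpen {y : ℂ | C₁ / 2 <
      ‖gP a b y n * gQ a b y (n - 1) - gP a b y (n - 1) * gQ a b y n‖} :=
    isOpen_lt continuous_const (continuous_norm.comp
      (((continuous_gP a b n).mul (continuous_gQ a b (n-1))).sub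
        ((continuous_gP a b (n-1)).mul (continuous_gQ a b n))))
  have h2 : IsOpen {y : ℂ | ‖gQ a b y n‖ < 1 + C₂} :=
    isOpen_lt (continuous_norm.comp (continuous_gQ a b n)) continuous_const
  have h3 : IsOpen {y : ℂ | ‖gQ a b y (n-1)‖ < 1 + C₂} :=
    isOpen_lt (continuous_norm.comp (continuous_gQ a b (n-1))) continuous_const
  have : {y : ℂ | goodSetCond a b C₁ C₂ n y}
      = {y : ℂ | C₁ / 2 < ‖gP a b y n * gQ a b y (n - 1)
          - gP a b y (n - 1) * gQ a b y n‖}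
        ∩ ({y : ℂ | ‖gQ a b y n‖ < 1 + C₂}
          ∩ {y : ℂ | ‖gQ a b y (n-1)‖ < 1 + C₂}) := by
    ext y
    simp only [goodSetCond, Set.mem_setOf_eq, Set.mem_inter_iff]
  rw [this]
  exact h1.inter (h2.inter h3)

lemma isOpen_bigS (a b : ℕ → Polynomial ℤ) (C₁ C₂ : ℝ) (N : ℕ) :
    IsOpen (bigS a b C₁ C₂ N) :=
  isOpen_biUnion fun n _ => isOpen_goodSet a b C₁ C₂ n

theorem stmt5 (a b : ℕ → Polynomial ℤ) (C₁ C₂ : ℝ) (hC₁ : 0 < C₁) (hC₂ : 0 < C₂)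
    (j d : ℕ) (hj : 0 < j) (hd : 0 < d)
    (nf : ℕ → ℕ) (hnfpos : ∀ m, 0 < m → 0 < nf m) (hnf : Tendsto nf atTop atTop)
    (hyp : ∀ m : ℕ, 0 < m → m ≡ j [MOD d] → ∀ x : ℂ, IsPrimitiveRoot x m →
      C₁ ≤ ‖gChi a x (nf m)‖ ∧
        max (‖gQ a b x (nf m)‖) (‖gQ a b x (nf m - 1)‖) ≤ C₂) :
    ∃ Y : Set ℂ, ¬ Y.Countable ∧ (∀ y ∈ Y, ‖y‖ = 1) ∧
      ∀ y ∈ Y, ∀ N : ℕ, ∃ n ≥ N, 0 < n ∧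
        C₁ / 2 <
          ‖gP a b y n * gQ a b y (n - 1) - gP a b y (n - 1) * gQ a b y n‖ ∧
        ‖gQ a b y n‖ < 1 + C₂ ∧ ‖gQ a b y (n - 1)‖ < 1 + C₂ := by
  classical
  haveI : CompleteSpace ↥(Metric.sphere (0:ℂ) 1) := Metric.isClosed_sphere.completeSpace_coe
  haveI hNE : Nonempty ↥(Metric.sphere (0:ℂ) 1) := ⟨⟨1, by rw [sphere_mem_iff]; simp⟩⟩
  set U : ℕ → Set ↥(Metric.sphere (0:ℂ) 1) :=
    fun N => Subtype.val ⁻¹' bigS a b C₁ C₂ N with hU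
  have hUopen : ∀ N, IsOpen (U N) :=
    fun N => (isOpen_bigS a b C₁ C₂ N).preimage continuous_subtype_val
  have hUdense : ∀ N, Dense (U N) := by
    intro N
    obtain ⟨M, hM⟩ := Filter.eventually_atTop.mp (hnf.eventually_ge_atTop N)
    rw [Metric.dense_iff]
    intro z r hr
    obtain ⟨θ, hθpos, hzexp⟩ :
        ∃ θ : ℝ, 0 < θ ∧ (z:ℂ) = Complex.exp ((θ:ℂ) * Complex.I) := by
      refine ⟨Complex.arg (z:ℂ) + 2 * Real.pi, ?_, ?_⟩
      · have := Complex.neg_pi_lt_arg (z:ℂ)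
        nlinarith [Real.pi_pos]
      · have h1 : ((↑(Complex.arg (z:ℂ) + 2 * Real.pi) : ℂ)) * Complex.I
            = (Complex.arg (z:ℂ) : ℂ) * Complex.I + 2 * Real.pi * Complex.I := by
          push_cast; ring
        rw [h1, Complex.exp_add, Complex.exp_two_pi_mul_I, mul_one]
        conv_lhs => rw [← Complex.norm_mul_exp_arg_mul_I (z:ℂ)]
        rw [(sphere_mem_iff (z:ℂ)).mp z.2]
        simp
    obtain ⟨m, hmM, hm0, hmod, x, hxprim, hxsph, hxdist⟩ :=
      exists_prim_root_near j d hj hd M θ r hθpos hr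
    refine ⟨⟨x, hxsph⟩, ?_, ?_⟩
    · rw [Metric.mem_ball, Subtype.dist_eq]
      rw [← hzexp] at hxdist
      exact hxdist
    · show x ∈ bigS a b C₁ C₂ N
      obtain ⟨hchi, hQ⟩ := hyp m hm0 hmod x hxprim
      have hn1 : 0 < nf m := hnfpos m hm0
      have hnN : N ≤ nf m := hM m hmM
      rw [mem_bigS]
      refine ⟨nf m, ⟨hnN, hn1⟩, ?_, ?_, ?_⟩
      · obtain ⟨n', hn'⟩ : ∃ n', nf m = n' + 1 := ⟨nf m - 1, by omega⟩
        rw [hn']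
        have hsub : n' + 1 - 1 = n' := by omega
        rw [hsub, det_eq a b x n']
        rw [norm_mul]
        have habs1 : ‖(-1:ℂ)^n'‖ = 1 := by
          rw [norm_pow]; simp
        rw [habs1, one_mul, ← hn']
        linarith
      · exact lt_of_le_of_lt (le_trans (le_max_left _ _) hQ) (by linarith)
      · exact lt_of_le_of_lt (le_trans (le_max_right _ _) hQ) (by linarith)
  refine ⟨Subtype.val '' (⋂ N, U N), ?_, ?_, ?_⟩
  · intro hc
    have hZc : (⋂ N, U N).Countable :=
      ((hc.preimage Subtype.val_injective).mono (Set.subset_preimage_image _ _))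
    haveI := hZc.to_subtype
    set f : ℕ ⊕ ↥(⋂ N, U N) → Set ↥(Metric.sphere (0:ℂ) 1) :=
      Sum.elim U (fun z => {(z : ↥(Metric.sphere (0:ℂ) 1))}ᶜ) with hf
    have hfopen : ∀ i, IsOpen (f i) := by
      rintro (N | z)
      · exact hUopen N
      · exact isOpen_compl_singleton
    have hfdense : ∀ i, Dense (f i) := by
      rintro (N | z)
      · exact hUdense N
      · exact @dense_compl_singleton _ _ _ (sphere_nebot _)
    have hdense : Dense (⋂ i, f i) := dense_iInter_of_isOpen hfopen hfdense
    obtain ⟨w, hw⟩ := hdense.nonempty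
    rw [Set.mem_iInter] at hw
    have hwZ : w ∈ ⋂ N, U N := Set.mem_iInter.mpr fun N => hw (Sum.inl N)
    have := hw (Sum.inr ⟨w, hwZ⟩)
    simp only [hf, Sum.elim_inr, Set.mem_compl_iff, Set.mem_singleton_iff] at this
    exact this trivial
  · rintro y ⟨w, _, rfl⟩
    exact (sphere_mem_iff (w:ℂ)).mp w.2
  · rintro y ⟨w, hw, rfl⟩ N
    have hwN : w ∈ U N := Set.mem_iInter.mp hw N
    have : (w:ℂ) ∈ bigS a b C₁ C₂ N := hwN
    rw [mem_bigS] at this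
    obtain ⟨n, ⟨hnN, hn0⟩, h1, h2, h3⟩ := this
    exact ⟨n, hnN, hn0, h1, h2, h3⟩
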